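/- Let f and (f_n)_{n∈ℕ} be bounded measurable functions on ℝ₊ supported in [0,1), with f_n → f uniformly on [0,1). Define V₀(g) := inf_{x̃ ∈ ℝ₊} ∫_{ℝ₊} (x ⊕ x̃)² |g(x)|² dx. Then lim_{n→∞} V₀(f_n) = V₀(f). -/

import Mathlib

open MeasureTheory Set Filter
open scoped ENNReal NNReal

noncomputable section

/-- The `j`-th binary digit of `x ∈ ℝ₊` in the expansion `x = ∑ x_j 2^{-j-1}`
    terminating in 0's for dyadic rationals. -/
def dDigit (x : ℝ) (j : ℤ) : ℕ := (⌊x * 2 ^ (j + 1)⌋).toNat % 2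

/-- The dyadic sum `x ⊕ y`. -/
def dSum (x y : ℝ) : ℝ := ∑' j : ℤ, |(dDigit x j : ℝ) - (dDigit y j : ℝ)| * 2 ^ (-j - 1)

/-- The Walsh character `w(t,x) = (-1)^{∑ t_j x_{-j-1}}`. -/
def walsh (t x : ℝ) : ℝ := (-1 : ℝ) ^ (∑' j : ℤ, dDigit t j * dDigit x (-j - 1))

/-- Lebesgue measure on `ℝ₊ = [0,∞)`. -/
def μplus : Measure ℝ := volume.restrict (Set.Ici 0)

/-- The Walsh–Fourier transform, as a pointwise integral (defined for `f ∈ L¹(ℝ₊)`). -/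
def WFT (f : ℝ → ℂ) (t : ℝ) : ℂ := ∫ x, f x * (walsh t x : ℂ) ∂μplus

/-- numerator of `V(f)`:  `inf_{x̃ ∈ ℝ₊} ∫_{ℝ₊} (x ⊕ x̃)² |f(x)|² dx`. -/
def Vnum (f : ℝ → ℂ) : ℝ≥0∞ :=
  ⨅ xt ∈ Set.Ici (0:ℝ), ∫⁻ x, ENNReal.ofReal ((dSum x xt) ^ 2) * (‖f x‖₊ : ℝ≥0∞) ^ 2 ∂μplus

/-- `V(f) = ‖f‖₂⁻² · inf_{x̃} ∫ (x ⊕ x̃)² |f(x)|² dx`. -/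
def Vfun (f : ℝ → ℂ) : ℝ≥0∞ := Vnum f / ∫⁻ x, (‖f x‖₊ : ℝ≥0∞) ^ 2 ∂μplus

/-- `fhat` is the Walsh–Fourier transform of `f ∈ L²(ℝ₊)` in the sense of the
    unitary `L²` extension: the transforms of the integrable truncations
    `f·χ_{[0,n)}` converge to `fhat` in `L²(ℝ₊)`. -/
def IsL2WFT (f fhat : ℝ → ℂ) : Prop :=
  Tendsto (fun n : ℕ =>
      eLpNorm (fun t => WFT (Set.indicator (Set.Ico (0:ℝ) (n:ℝ)) f) t - fhat t) 2 μplus)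
    atTop (nhds 0)


lemma dDigit_le_one (x : ℝ) (j : ℤ) : dDigit x j ≤ 1 :=
  Nat.lt_succ_iff.mp (Nat.mod_lt _ two_pos)

lemma dDigit_eq_zero {x : ℝ} (hx : 0 ≤ x) {j : ℤ} (h : x * 2 ^ (j + 1) < 1) :
    dDigit x j = 0 := by
  have : ⌊x * 2 ^ (j + 1)⌋ = 0 := Int.floor_eq_zero_iff.2
    ⟨mul_nonneg hx (by positivity), h⟩
  simp [dDigit, this]

lemma dDigit_eq_zero_of_lt_one {x : ℝ} (hx : 0 ≤ x) (hx1 : x < 1) {j : ℤ} (hj : j < 0) :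
    dDigit x j = 0 := by
  apply dDigit_eq_zero hx
  have h2 : (2:ℝ) ^ (j + 1) ≤ 1 := zpow_le_one_of_nonpos₀ one_le_two (by omega)
  calc x * 2 ^ (j + 1) ≤ x * 1 := by
        exact mul_le_mul_of_nonneg_left h2 hx
    _ < 1 := by linarith

/-- the term of the dyadic sum -/
def dTerm (x y : ℝ) (j : ℤ) : ℝ := |(dDigit x j : ℝ) - (dDigit y j : ℝ)| * 2 ^ (-j - 1)

lemma dTerm_nonneg (x y : ℝ) (j : ℤ) : 0 ≤ dTerm x y j := by
  apply mul_nonneg (abs_nonneg _) (by positivity)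

lemma dTerm_le (x y : ℝ) (j : ℤ) : dTerm x y j ≤ 2 ^ (-j - 1) := by
  have h1 : |(dDigit x j : ℝ) - (dDigit y j : ℝ)| ≤ 1 := by
    have := dDigit_le_one x j
    have := dDigit_le_one y j
    rw [abs_sub_le_iff]
    constructor <;> push_cast <;> [skip; skip] <;>
      · have hx := dDigit_le_one x j
        have hy := dDigit_le_one y j
        have hx' : ((dDigit x j : ℝ)) ≤ 1 := by exact_mod_cast hx
        have hy' : ((dDigit y j : ℝ)) ≤ 1 := by exact_mod_cast hy
        have hx0 : (0:ℝ) ≤ dDigit x j := by positivity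
        have hy0 : (0:ℝ) ≤ dDigit y j := by positivity
        linarith
  calc dTerm x y j ≤ 1 * 2 ^ (-j - 1) := mul_le_mul_of_nonneg_right h1 (by positivity)
    _ = 2 ^ (-j - 1) := one_mul _

lemma dSum_summable {x y : ℝ} (hx : 0 ≤ x) (hy : 0 ≤ y) :
    Summable (dTerm x y) := by
  obtain ⟨N, hN⟩ := exists_nat_gt (max x y)
  have hxN : x < 2 ^ N := lt_of_lt_of_le (lt_of_le_of_lt (le_max_left x y) hN)
    (by exact_mod_cast Nat.le_of_lt (Nat.lt_two_pow_self))
  have hyN : y < 2 ^ N := lt_of_lt_of_le (lt_of_le_of_lt (le_max_right x y) hN)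
    (by exact_mod_cast Nat.le_of_lt (Nat.lt_two_pow_self))
  have hvanish : ∀ j : ℤ, j < -(N:ℤ) → dTerm x y j = 0 := by
    intro j hj
    have h2 : (2:ℝ) ^ (j + 1) ≤ 2 ^ (-(N:ℤ)) := by
      apply zpow_le_zpow_right₀ one_le_two (by omega)
    have key : ∀ z : ℝ, 0 ≤ z → z < 2 ^ N → z * 2 ^ (j + 1) < 1 := by
      intro z hz hzN
      calc z * 2 ^ (j + 1) ≤ z * 2 ^ (-(N:ℤ)) := mul_le_mul_of_nonneg_left h2 hz
        _ < 2 ^ N * 2 ^ (-(N:ℤ)) := by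
            apply mul_lt_mul_of_pos_right _ (by positivity)
            exact_mod_cast hzN
        _ = 1 := by
            rw [← zpow_natCast (2:ℝ) N, ← zpow_add₀ (two_ne_zero)]
            simp
    rw [dTerm, dDigit_eq_zero hx (key x hx hxN), dDigit_eq_zero hy (key y hy hyN)]
    simp
  have hinj : Function.Injective (fun n : ℕ => (n : ℤ) - N) := by
    intro a b h; simpa using h
  rw [← hinj.summable_iff]
  · refine Summable.of_nonneg_of_le (g := dTerm x y ∘ fun n : ℕ => (n:ℤ) - N)
      (f := fun n : ℕ => (2:ℝ) ^ (N:ℤ) * (1/2) ^ n)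
      (fun n => dTerm_nonneg x y _) (fun n => ?_)
      ((summable_geometric_of_lt_one (by norm_num) (by norm_num)).mul_left _)
    calc dTerm x y ((n:ℤ) - N) ≤ 2 ^ (-((n:ℤ) - N) - 1) := dTerm_le x y _
        _ ≤ 2 ^ ((N:ℤ) - n) := by
            apply zpow_le_zpow_right₀ one_le_two (by omega)
        _ = 2 ^ (N:ℤ) * (1/2) ^ n := by
            rw [sub_eq_add_neg, zpow_add₀ (two_ne_zero)]
            congr 1
            rw [one_div, inv_pow, ← zpow_natCast (2:ℝ) n, ← zpow_neg]
  · intro j hj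
    apply hvanish
    simp only [Set.mem_range, not_exists] at hj
    by_contra h
    push_neg at h
    obtain ⟨n, hn⟩ : ∃ n : ℕ, (n : ℤ) = j + N := ⟨(j + N).toNat, Int.toNat_of_nonneg (by omega)⟩
    exact hj n (by omega)

lemma dSum_nonneg (x y : ℝ) : 0 ≤ dSum x y := tsum_nonneg (fun j => dTerm_nonneg x y j)

lemma dSum_le_one {x y : ℝ} (hx : x ∈ Ico (0:ℝ) 1) (hy : y ∈ Ico (0:ℝ) 1) :
    dSum x y ≤ 1 := by
  have hvanish : ∀ j : ℤ, j < 0 → dTerm x y j = 0 := by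
    intro j hj
    rw [dTerm, dDigit_eq_zero_of_lt_one hx.1 hx.2 hj, dDigit_eq_zero_of_lt_one hy.1 hy.2 hj]
    simp
  have hinj : Function.Injective (fun n : ℕ => (n : ℤ)) := fun a b h => by simpa using h
  have hsupp : Function.support (dTerm x y) ⊆ Set.range (fun n : ℕ => (n : ℤ)) := by
    intro j hj
    rcases le_or_gt 0 j with h | h
    · exact ⟨j.toNat, by simp [Int.toNat_of_nonneg h]⟩
    · exact absurd (hvanish j h) hj
  have heq : ∑' n : ℕ, dTerm x y n = dSum x y := hinj.tsum_eq hsupp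
  rw [dSum] at heq ⊢
  rw [← heq]
  have hs1 : Summable (fun n : ℕ => dTerm x y n) := by
    rw [show (fun n : ℕ => dTerm x y n) = dTerm x y ∘ (fun n : ℕ => (n:ℤ)) from rfl,
      Function.Injective.summable_iff hinj]
    · exact dSum_summable hx.1 hy.1
    · intro j hj
      apply hvanish
      by_contra h
      push_neg at h
      exact hj ⟨j.toNat, by simp [Int.toNat_of_nonneg h]⟩
  have hs2 : Summable (fun n : ℕ => (1/2:ℝ) * (1/2) ^ n) :=
    (summable_geometric_of_lt_one (by norm_num) (by norm_num)).mul_left _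
  calc ∑' n : ℕ, dTerm x y n ≤ ∑' n : ℕ, (1/2:ℝ) * (1/2) ^ n := by
        apply Summable.tsum_le_tsum _ hs1 hs2
        intro n
        calc dTerm x y n ≤ 2 ^ (-(n:ℤ) - 1) := dTerm_le x y _
          _ = (1/2:ℝ) * (1/2) ^ n := by
              rw [one_div, inv_pow, ← zpow_natCast (2:ℝ) n, ← zpow_neg, sub_eq_add_neg,
                add_comm, zpow_add₀ (two_ne_zero)]
              norm_num
    _ = 1 := by
        rw [tsum_mul_left, tsum_geometric_of_lt_one (by norm_num) (by norm_num)]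
        norm_num

lemma one_le_dSum {x y : ℝ} (hx : x ∈ Ico (0:ℝ) 1) (hy : 1 ≤ y) :
    1 ≤ dSum x y := by
  set m := ⌊y⌋₊ with hm
  have hm1 : 1 ≤ m := Nat.one_le_floor_iff _ |>.mpr (by exact_mod_cast hy)
  set k := Nat.log 2 m with hk
  have hk1 : 2 ^ k ≤ m := Nat.pow_log_le_self 2 (by omega)
  have hk2 : m < 2 ^ (k + 1) := Nat.lt_pow_succ_log_self one_lt_two m
  have hdiv : m / 2 ^ k = 1 := by
    have h1 : 1 ≤ m / 2 ^ k := (Nat.le_div_iff_mul_le (Nat.two_pow_pos k)).mpr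
      (by omega)
    have h2 : m / 2 ^ k < 2 := (Nat.div_lt_iff_lt_mul (Nat.two_pow_pos k)).mpr
      (by omega)
    omega
  set j₀ : ℤ := -(k:ℤ) - 1 with hj₀
  have hy0 : (0:ℝ) ≤ y := le_trans zero_le_one hy
  have hdy : dDigit y j₀ = 1 := by
    rw [dDigit]
    have he : j₀ + 1 = -(k:ℤ) := by omega
    rw [he]
    have : y * 2 ^ (-(k:ℤ)) = y / ((2^k : ℕ) : ℝ) := by
      push_cast
      rw [zpow_neg, zpow_natCast, div_eq_mul_inv]
    rw [this, Int.floor_toNat, Nat.floor_div_natCast, ← hm, hdiv]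
  have hdx : dDigit x j₀ = 0 := dDigit_eq_zero_of_lt_one hx.1 hx.2 (by omega)
  have hterm : (1:ℝ) ≤ dTerm x y j₀ := by
    rw [dTerm, hdx, hdy]
    simp only [Nat.cast_one, Nat.cast_zero, zero_sub, abs_neg, abs_one, one_mul]
    have he : -j₀ - 1 = (k:ℤ) := by omega
    rw [he, zpow_natCast]
    exact one_le_pow₀ one_le_two
  calc (1:ℝ) ≤ dTerm x y j₀ := hterm
    _ ≤ dSum x y := Summable.le_tsum (dSum_summable hx.1 hy0) j₀ (fun j _ => dTerm_nonneg x y j)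


def Jint (g : ℝ → ℂ) (xt : ℝ) : ℝ≥0∞ :=
  ∫⁻ x, ENNReal.ofReal ((dSum x xt) ^ 2) * (‖g x‖₊ : ℝ≥0∞) ^ 2 ∂μplus

lemma coe_nnnorm_sq (a : ℂ) : (‖a‖₊ : ℝ≥0∞) ^ 2 = ENNReal.ofReal (‖a‖ ^ 2) := by
  rw [ENNReal.ofReal_pow (norm_nonneg a)]; exact congrArg (· ^ 2) (ofReal_norm a).symm

lemma muplus_Ico : μplus (Ico (0:ℝ) 1) = 1 := by
  rw [μplus, Measure.restrict_apply measurableSet_Ico,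
    inter_eq_left.mpr (fun x hx => hx.1), Real.volume_Ico]
  norm_num

lemma zero_mem_Ico : (0:ℝ) ∈ Ico (0:ℝ) 1 := ⟨le_refl 0, one_pos⟩

lemma weight_le_one {x xt : ℝ} (hx : x ∈ Ico (0:ℝ) 1) (hxt : xt ∈ Ico (0:ℝ) 1) :
    ENNReal.ofReal ((dSum x xt) ^ 2) ≤ 1 := by
  rw [show (1:ℝ≥0∞) = ENNReal.ofReal 1 by simp]
  apply ENNReal.ofReal_le_ofReal
  have h1 := dSum_nonneg x xt
  have h2 := dSum_le_one hx hxt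
  nlinarith

lemma Jint_le_add (g h : ℝ → ℂ) (c : ℝ≥0∞)
    (hg0 : ∀ x ∉ Ico (0:ℝ) 1, g x = 0)
    {xt : ℝ} (hxt : xt ∈ Ico (0:ℝ) 1)
    (hpt : ∀ x, (‖g x‖₊ : ℝ≥0∞) ^ 2 ≤ (‖h x‖₊ : ℝ≥0∞) ^ 2 + c) :
    Jint g xt ≤ Jint h xt + c := by
  have step : Jint g xt ≤ ∫⁻ x, (ENNReal.ofReal ((dSum x xt) ^ 2) * (‖h x‖₊ : ℝ≥0∞) ^ 2
      + (Ico (0:ℝ) 1).indicator (fun _ => c) x) ∂μplus := by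
    apply lintegral_mono
    intro x
    dsimp only
    by_cases hx : x ∈ Ico (0:ℝ) 1
    · rw [Set.indicator_of_mem hx]
      calc ENNReal.ofReal ((dSum x xt) ^ 2) * (‖g x‖₊ : ℝ≥0∞) ^ 2
          ≤ ENNReal.ofReal ((dSum x xt) ^ 2) * ((‖h x‖₊ : ℝ≥0∞) ^ 2 + c) :=
            mul_le_mul_right (hpt x) _
        _ = ENNReal.ofReal ((dSum x xt) ^ 2) * (‖h x‖₊ : ℝ≥0∞) ^ 2
            + ENNReal.ofReal ((dSum x xt) ^ 2) * c := mul_add _ _ _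
        _ ≤ ENNReal.ofReal ((dSum x xt) ^ 2) * (‖h x‖₊ : ℝ≥0∞) ^ 2 + 1 * c :=
            add_le_add_right (mul_le_mul_left (weight_le_one hx hxt) c) _
        _ = _ := by rw [one_mul]
    · rw [hg0 x hx]
      simp
  calc Jint g xt ≤ _ := step
    _ = Jint h xt + c * μplus (Ico (0:ℝ) 1) := by
        rw [lintegral_add_right _ (measurable_const.indicator measurableSet_Ico),
          lintegral_indicator_const measurableSet_Ico]
        rfl
    _ = Jint h xt + c := by rw [muplus_Ico, mul_one]

lemma Jint_zero_le (h : ℝ → ℂ) (hh0 : ∀ x ∉ Ico (0:ℝ) 1, h x = 0)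
    {xt : ℝ} (hxt : 1 ≤ xt) : Jint h 0 ≤ Jint h xt := by
  apply lintegral_mono
  intro x
  dsimp only
  by_cases hx : x ∈ Ico (0:ℝ) 1
  · apply mul_le_mul_left
    apply ENNReal.ofReal_le_ofReal
    have h1 := dSum_nonneg x 0
    have h2 := dSum_le_one hx zero_mem_Ico
    have h3 := one_le_dSum hx hxt
    nlinarith
  · rw [hh0 x hx]
    simp

lemma V_le_V_add (g h : ℝ → ℂ) (c : ℝ≥0∞)
    (hg0 : ∀ x ∉ Ico (0:ℝ) 1, g x = 0) (hh0 : ∀ x ∉ Ico (0:ℝ) 1, h x = 0)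
    (hpt : ∀ x, (‖g x‖₊ : ℝ≥0∞) ^ 2 ≤ (‖h x‖₊ : ℝ≥0∞) ^ 2 + c) :
    (⨅ xt ∈ Ici (0:ℝ), Jint g xt) ≤ (⨅ xt ∈ Ici (0:ℝ), Jint h xt) + c := by
  have step : ∀ xt ∈ Ici (0:ℝ), (⨅ xt ∈ Ici (0:ℝ), Jint g xt) ≤ Jint h xt + c := by
    intro xt hxt
    rcases lt_or_ge xt 1 with h1 | h1
    · exact le_trans (biInf_le _ hxt) (Jint_le_add g h c hg0 ⟨hxt, h1⟩ hpt)
    · calc (⨅ xt ∈ Ici (0:ℝ), Jint g xt) ≤ Jint g 0 := biInf_le _ self_mem_Ici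
        _ ≤ Jint h 0 + c := Jint_le_add g h c hg0 zero_mem_Ico hpt
        _ ≤ Jint h xt + c := add_le_add_left (Jint_zero_le h hh0 h1) c
  calc (⨅ xt ∈ Ici (0:ℝ), Jint g xt) ≤ ⨅ xt ∈ Ici (0:ℝ), (Jint h xt + c) := le_iInf₂ step
    _ = (⨅ xt ∈ Ici (0:ℝ), Jint h xt) + c := by simp only [ENNReal.iInf_add]

lemma Jint_lt_top (h : ℝ → ℂ) (M : ℝ) (hM : ∀ x, ‖h x‖ ≤ M)
    (hh0 : ∀ x ∉ Ico (0:ℝ) 1, h x = 0) : Jint h 0 < ⊤ := by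
  have step : Jint h 0 ≤ ∫⁻ x, (Ico (0:ℝ) 1).indicator
      (fun _ => ENNReal.ofReal (M ^ 2)) x ∂μplus := by
    apply lintegral_mono
    intro x
    dsimp only
    by_cases hx : x ∈ Ico (0:ℝ) 1
    · rw [Set.indicator_of_mem hx]
      calc ENNReal.ofReal ((dSum x 0) ^ 2) * (‖h x‖₊ : ℝ≥0∞) ^ 2
          ≤ 1 * ENNReal.ofReal (M ^ 2) := by
            apply mul_le_mul' (weight_le_one hx zero_mem_Ico)
            rw [coe_nnnorm_sq]
            exact ENNReal.ofReal_le_ofReal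
              (pow_le_pow_left₀ (norm_nonneg _) (hM x) 2)
        _ = ENNReal.ofReal (M ^ 2) := one_mul _
    · rw [hh0 x hx]
      simp
  apply lt_of_le_of_lt step
  rw [lintegral_indicator_const measurableSet_Ico, muplus_Ico, mul_one]
  exact ENNReal.ofReal_lt_top

lemma sq_bound {a b : ℂ} {δ Mb : ℝ} (hab : ‖a - b‖ ≤ δ) (hb : ‖b‖ ≤ Mb) :
    (‖a‖₊ : ℝ≥0∞) ^ 2 ≤ (‖b‖₊ : ℝ≥0∞) ^ 2 + ENNReal.ofReal (δ * (2 * Mb + δ)) := by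
  have h0a := norm_nonneg a
  have h0b := norm_nonneg b
  have h1 : ‖a‖ ≤ ‖b‖ + δ := by
    have := norm_sub_norm_le a b
    linarith
  have h0δ : 0 ≤ δ := le_trans (norm_nonneg _) hab
  have h2 : ‖a‖ ^ 2 ≤ ‖b‖ ^ 2 + δ * (2 * Mb + δ) := by
    nlinarith [mul_le_mul_of_nonneg_right hb h0δ, mul_self_le_mul_self h0a h1]
  rw [coe_nnnorm_sq, coe_nnnorm_sq]
  calc ENNReal.ofReal (‖a‖ ^ 2) ≤ ENNReal.ofReal (‖b‖ ^ 2 + δ * (2 * Mb + δ)) :=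
        ENNReal.ofReal_le_ofReal h2
    _ ≤ ENNReal.ofReal (‖b‖ ^ 2) + ENNReal.ofReal (δ * (2 * Mb + δ)) :=
        ENNReal.ofReal_add_le


/-- if `f` and the `fₙ` are bounded measurable functions supported in `[0,1)`
and `fₙ → f` uniformly on `[0,1)`, then
`V₀(fₙ) = inf_{x̃∈ℝ₊} ∫ (x ⊕ x̃)² |fₙ|² → V₀(f)`. -/
theorem stmt13 (f : ℝ → ℂ) (fn : ℕ → ℝ → ℂ)
    (hfm : Measurable f) (hfnm : ∀ n, Measurable (fn n))
    (hfb : ∃ M : ℝ, ∀ x, ‖f x‖ ≤ M) (hfnb : ∀ n, ∃ M : ℝ, ∀ x, ‖fn n x‖ ≤ M)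
    (hsupp : ∀ x ∉ Set.Ico (0:ℝ) 1, f x = 0)
    (hsuppn : ∀ n, ∀ x ∉ Set.Ico (0:ℝ) 1, fn n x = 0)
    (hunif : TendstoUniformlyOn fn f atTop (Set.Ico (0:ℝ) 1)) :
    Tendsto (fun n => ⨅ xt ∈ Set.Ici (0:ℝ),
        ∫⁻ x, ENNReal.ofReal ((dSum x xt) ^ 2) * (‖fn n x‖₊ : ℝ≥0∞) ^ 2 ∂μplus)
      atTop (nhds (⨅ xt ∈ Set.Ici (0:ℝ),
        ∫⁻ x, ENNReal.ofReal ((dSum x xt) ^ 2) * (‖f x‖₊ : ℝ≥0∞) ^ 2 ∂μplus)) := by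
  obtain ⟨M₀, hM₀⟩ := hfb
  set M : ℝ := max M₀ 0 with hMdef
  have hMf : ∀ x, ‖f x‖ ≤ M := fun x => (hM₀ x).trans (le_max_left _ _)
  have hM0 : (0:ℝ) ≤ M := le_max_right _ _
  show Tendsto (fun n => ⨅ xt ∈ Set.Ici (0:ℝ), Jint (fn n) xt) atTop
    (nhds (⨅ xt ∈ Set.Ici (0:ℝ), Jint f xt))
  set A : ℝ≥0∞ := ⨅ xt ∈ Set.Ici (0:ℝ), Jint f xt with hA
  have hAne : A ≠ ⊤ := by
    apply ne_top_of_le_ne_top (Jint_lt_top f M hMf hsupp).ne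
    exact biInf_le _ self_mem_Ici
  rw [ENNReal.tendsto_nhds hAne]
  intro ε hε
  set εr : ℝ≥0∞ := min ε 1 with hεr
  have hεrpos : 0 < εr := lt_min hε one_pos
  have hεrne : εr ≠ ⊤ := ne_top_of_le_ne_top ENNReal.one_ne_top (min_le_right _ _)
  set t : ℝ := εr.toReal with ht
  have htpos : 0 < t := ENNReal.toReal_pos hεrpos.ne' hεrne
  have ht1 : t ≤ 1 := by
    rw [ht, ← ENNReal.toReal_one]
    exact ENNReal.toReal_mono ENNReal.one_ne_top (min_le_right _ _)
  set δ : ℝ := t / (2 * M + 4) with hδdef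
  have hD : (0:ℝ) < 2 * M + 4 := by linarith
  have hδpos : 0 < δ := div_pos htpos hD
  have hδ1 : δ ≤ 1 := by
    rw [hδdef, div_le_one hD]
    linarith
  have hc : ENNReal.ofReal (δ * (2 * M + 3)) ≤ ε := by
    have h1 : δ * (2 * M + 3) ≤ t := by
      rw [hδdef, div_mul_eq_mul_div, div_le_iff₀ hD]
      nlinarith
    calc ENNReal.ofReal (δ * (2 * M + 3)) ≤ ENNReal.ofReal t := ENNReal.ofReal_le_ofReal h1
      _ = εr := ENNReal.ofReal_toReal hεrne
      _ ≤ ε := min_le_left _ _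
  have hev := Metric.tendstoUniformlyOn_iff.mp hunif δ hδpos
  filter_upwards [hev] with n hn
  -- uniform bound: ‖fn n x - f x‖ ≤ δ for all x
  have hdist : ∀ x, ‖fn n x - f x‖ ≤ δ := by
    intro x
    by_cases hx : x ∈ Ico (0:ℝ) 1
    · have := hn x hx
      rw [dist_eq_norm] at this
      rw [← norm_neg]
      simpa [neg_sub] using this.le
    · rw [hsupp x hx, hsuppn n x hx]
      simpa using hδpos.le
  set c : ℝ≥0∞ := ENNReal.ofReal (δ * (2 * M + 3)) with hcdef
  have hpt1 : ∀ x, (‖fn n x‖₊ : ℝ≥0∞) ^ 2 ≤ (‖f x‖₊ : ℝ≥0∞) ^ 2 + c := by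
    intro x
    refine (sq_bound (hdist x) (hMf x)).trans ?_
    apply add_le_add_right
    apply ENNReal.ofReal_le_ofReal
    nlinarith
  have hpt2 : ∀ x, (‖f x‖₊ : ℝ≥0∞) ^ 2 ≤ (‖fn n x‖₊ : ℝ≥0∞) ^ 2 + c := by
    intro x
    have hd : ‖f x - fn n x‖ ≤ δ := by
      rw [← norm_neg, neg_sub]; exact hdist x
    have hbn : ‖fn n x‖ ≤ M + δ := by
      have := norm_sub_norm_le (fn n x) (f x)
      have := hdist x
      have := hMf x
      linarith
    refine (sq_bound hd hbn).trans ?_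
    apply add_le_add_right
    apply ENNReal.ofReal_le_ofReal
    nlinarith
  have hup : (⨅ xt ∈ Set.Ici (0:ℝ), Jint (fn n) xt) ≤ A + c :=
    V_le_V_add (fn n) f c (hsuppn n) hsupp hpt1
  have hdown : A ≤ (⨅ xt ∈ Set.Ici (0:ℝ), Jint (fn n) xt) + c :=
    V_le_V_add f (fn n) c hsupp (hsuppn n) hpt2
  constructor
  · rw [tsub_le_iff_right]
    exact hdown.trans (add_le_add_right hc _)
  · exact hup.trans (add_le_add_right hc _)
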